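/- Let C be a v×v real symmetric positive semidefinite matrix, let W be a v×v real symmetric positive definite matrix, let P be the orthogonal projection matrix onto the column space of C, and set R = ((P W^{−1} P)⁺)^{1/2}, the positive semidefinite square root of the Moore–Penrose pseudoinverse of P W^{−1} P. Then the v×v matrices M = W^{−1/2} C W^{−1/2} and N = (R C⁺ R)⁺ have the same eigenvalues including multiplicities; that is, for every real λ, the dimension of the kernel of M − λ·I_v equals the dimension of the kernel of N − λ·I_v. -/

import Mathlib

open Matrix

/-- The column space of a real matrix. -/
def colSpace {m n : ℕ} (A : Matrix (Fin m) (Fin n) ℝ) : Submodule ℝ (Fin m → ℝ) :=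
  LinearMap.range A.mulVecLin

/-- `B` is the Moore–Penrose pseudoinverse of `A`. -/
def IsMPInv {m n : ℕ} (A : Matrix (Fin m) (Fin n) ℝ) (B : Matrix (Fin n) (Fin m) ℝ) : Prop :=
  A * B * A = A ∧ B * A * B = B ∧ (A * B)ᵀ = A * B ∧ (B * A)ᵀ = B * A

/- ### Auxiliary lemmas -/

lemma aux_mul_transpose_self_eq_zero {m n : ℕ} {A : Matrix (Fin m) (Fin n) ℝ}
    (h : A * Aᵀ = 0) : A = 0 := by
  funext i j
  have h1 : (A * Aᵀ) i i = 0 := by rw [h]; rfl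
  have h2 : dotProduct (A i) (A i) = 0 := by
    rw [← h1, Matrix.mul_apply]; rfl
  exact congrFun (dotProduct_self_eq_zero.mp h2) j

lemma aux_ext_mulVec {m n : ℕ} {A B : Matrix (Fin m) (Fin n) ℝ}
    (h : ∀ x, A *ᵥ x = B *ᵥ x) : A = B := by
  funext i j
  have := congrFun (h (Pi.single j 1)) i
  simpa [Matrix.mulVec_single] using this

lemma aux_psd_symm {n : ℕ} {A : Matrix (Fin n) (Fin n) ℝ} (h : A.PosSemidef) : Aᵀ = A := by
  rw [← Matrix.conjTranspose_eq_transpose_of_trivial]; exact h.isHermitian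

lemma aux_mpinv_transpose {m n : ℕ} {A : Matrix (Fin m) (Fin n) ℝ}
    {B : Matrix (Fin n) (Fin m) ℝ} (h : IsMPInv A B) : IsMPInv Aᵀ Bᵀ := by
  obtain ⟨h1, h2, h3, h4⟩ := h
  refine ⟨?_, ?_, ?_, ?_⟩
  · have e : (A * B * A)ᵀ = Aᵀ * Bᵀ * Aᵀ := by
      rw [transpose_mul, transpose_mul, Matrix.mul_assoc]
    rw [← e, h1]
  · have e : (B * A * B)ᵀ = Bᵀ * Aᵀ * Bᵀ := by
      rw [transpose_mul, transpose_mul, Matrix.mul_assoc]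
    rw [← e, h2]
  · have e : Aᵀ * Bᵀ = (B * A)ᵀ := (transpose_mul B A).symm
    rw [e, h4]
    exact h4
  · have e : Bᵀ * Aᵀ = (A * B)ᵀ := (transpose_mul A B).symm
    rw [e, h3]
    exact h3

lemma aux_mpinv_unique {m n : ℕ} {A : Matrix (Fin m) (Fin n) ℝ}
    {B₁ B₂ : Matrix (Fin n) (Fin m) ℝ} (h1 : IsMPInv A B₁) (h2 : IsMPInv A B₂) : B₁ = B₂ := by
  obtain ⟨h11, h12, h13, h14⟩ := h1
  obtain ⟨h21, h22, h23, h24⟩ := h2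
  have hAB : A * B₁ = A * B₂ := by
    calc A * B₁ = (A * B₁)ᵀ := h13.symm
      _ = ((A * B₂) * (A * B₁))ᵀ := by
          rw [show (A * B₂) * (A * B₁) = (A * B₂ * A) * B₁ from
            (Matrix.mul_assoc (A * B₂) A B₁).symm, h21]
      _ = (A * B₁)ᵀ * (A * B₂)ᵀ := by rw [transpose_mul]
      _ = (A * B₁) * (A * B₂) := by rw [h13, h23]
      _ = A * B₂ := by
          rw [show (A * B₁) * (A * B₂) = (A * B₁ * A) * B₂ from
            (Matrix.mul_assoc (A * B₁) A B₂).symm, h11]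
  have hBA : B₁ * A = B₂ * A := by
    calc B₁ * A = (B₁ * A)ᵀ := h14.symm
      _ = ((B₁ * A) * (B₂ * A))ᵀ := by
          rw [show (B₁ * A) * (B₂ * A) = B₁ * (A * B₂ * A) from by
            rw [Matrix.mul_assoc, ← Matrix.mul_assoc A B₂ A], h21]
      _ = (B₂ * A)ᵀ * (B₁ * A)ᵀ := by rw [transpose_mul]
      _ = (B₂ * A) * (B₁ * A) := by rw [h14, h24]
      _ = B₂ * A := by
          rw [show (B₂ * A) * (B₁ * A) = B₂ * (A * B₁ * A) from by
            rw [Matrix.mul_assoc, ← Matrix.mul_assoc A B₁ A], h11]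
  calc B₁ = B₁ * A * B₁ := h12.symm
    _ = B₂ * A * B₁ := by rw [hBA]
    _ = B₂ * (A * B₁) := Matrix.mul_assoc B₂ A B₁
    _ = B₂ * (A * B₂) := by rw [hAB]
    _ = B₂ := by rw [← Matrix.mul_assoc, h22]

/-- For `μ ≠ 0` the `μ`-eigenspace of `Z Zᵀ` is at most as large as that of `Zᵀ Z`. -/
lemma aux_eig_le {v : ℕ} (Z : Matrix (Fin v) (Fin v) ℝ) {μ : ℝ} (hμ : μ ≠ 0) :
    Module.finrank ℝ (LinearMap.ker ((Z * Zᵀ - μ • 1).mulVecLin)) ≤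
      Module.finrank ℝ (LinearMap.ker ((Zᵀ * Z - μ • 1).mulVecLin)) := by
  have hmem : ∀ (S : Matrix (Fin v) (Fin v) ℝ) (u : Fin v → ℝ),
      u ∈ LinearMap.ker ((S - μ • 1).mulVecLin) ↔ S *ᵥ u = μ • u := by
    intro S u
    rw [LinearMap.mem_ker, mulVecLin_apply, sub_mulVec, smul_mulVec, one_mulVec,
      sub_eq_zero]
  have hstep : ∀ u : Fin v → ℝ, (Z * Zᵀ) *ᵥ u = μ • u →
      (Zᵀ * Z) *ᵥ (Zᵀ *ᵥ u) = μ • (Zᵀ *ᵥ u) := by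
    intro u hu
    calc (Zᵀ * Z) *ᵥ (Zᵀ *ᵥ u) = Zᵀ *ᵥ (Z *ᵥ (Zᵀ *ᵥ u)) :=
          (mulVec_mulVec (Zᵀ *ᵥ u) Zᵀ Z).symm
      _ = Zᵀ *ᵥ ((Z * Zᵀ) *ᵥ u) := congrArg (fun w => Zᵀ *ᵥ w) (mulVec_mulVec u Z Zᵀ)
      _ = Zᵀ *ᵥ (μ • u) := by rw [hu]
      _ = μ • (Zᵀ *ᵥ u) := by rw [mulVec_smul]
  let f : (LinearMap.ker ((Z * Zᵀ - μ • 1).mulVecLin)) →ₗ[ℝ]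
      (LinearMap.ker ((Zᵀ * Z - μ • 1).mulVecLin)) :=
    { toFun := fun u => ⟨Zᵀ *ᵥ u.1, (hmem _ _).mpr (hstep u.1 ((hmem _ u.1).mp u.2))⟩
      map_add' := fun x y => by apply Subtype.ext; simp [Matrix.mulVec_add]
      map_smul' := fun c x => by apply Subtype.ext; simp [Matrix.mulVec_smul] }
  have hinj : Function.Injective f := by
    intro x y hxy
    have h1 : Zᵀ *ᵥ x.1 = Zᵀ *ᵥ y.1 := congrArg Subtype.val hxy
    have hx := (hmem _ x.1).mp x.2
    have hy := (hmem _ y.1).mp y.2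
    have h2 : μ • x.1 = μ • y.1 := by
      calc μ • x.1 = (Z * Zᵀ) *ᵥ x.1 := hx.symm
        _ = Z *ᵥ (Zᵀ *ᵥ x.1) := by rw [mulVec_mulVec]
        _ = Z *ᵥ (Zᵀ *ᵥ y.1) := by rw [h1]
        _ = (Z * Zᵀ) *ᵥ y.1 := by rw [mulVec_mulVec]
        _ = μ • y.1 := hy
    exact Subtype.ext (smul_right_injective _ hμ h2)
  exact LinearMap.finrank_le_finrank_of_injective hinj

lemma aux_ker_zero {v : ℕ} (Z : Matrix (Fin v) (Fin v) ℝ) :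
    Module.finrank ℝ (LinearMap.ker ((Z * Zᵀ).mulVecLin)) + (Zᵀ * Z).rank = v := by
  have h1 : LinearMap.ker ((Z * Zᵀ).mulVecLin) = LinearMap.ker (Zᵀ.mulVecLin) := by
    have := Matrix.ker_mulVecLin_transpose_mul_self Zᵀ
    rwa [transpose_transpose] at this
  have h2 : (Zᵀ * Z).rank = Zᵀ.rank := by
    rw [Matrix.rank_transpose_mul_self, Matrix.rank_transpose]
  have h3 := LinearMap.finrank_range_add_finrank_ker (Zᵀ.mulVecLin)
  rw [h1, h2, Nat.add_comm]
  simpa [Matrix.rank] using h3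

/-- If `Xᵀ X = Yᵀ Y` then `X Xᵀ` and `Y Yᵀ` have the same eigenvalue multiplicities. -/
lemma aux_key {v : ℕ} (X Y : Matrix (Fin v) (Fin v) ℝ) (h : Xᵀ * X = Yᵀ * Y) (μ : ℝ) :
    Module.finrank ℝ (LinearMap.ker ((X * Xᵀ - μ • 1).mulVecLin)) =
      Module.finrank ℝ (LinearMap.ker ((Y * Yᵀ - μ • 1).mulVecLin)) := by
  by_cases hμ : μ = 0
  · subst hμ
    rw [show (0 : ℝ) • (1 : Matrix (Fin v) (Fin v) ℝ) = 0 from zero_smul _ _, sub_zero, sub_zero]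
    have hX := aux_ker_zero X
    have hY := aux_ker_zero Y
    rw [h] at hX
    omega
  · have le1 : ∀ Z : Matrix (Fin v) (Fin v) ℝ,
        Module.finrank ℝ (LinearMap.ker ((Z * Zᵀ - μ • 1).mulVecLin)) =
          Module.finrank ℝ (LinearMap.ker ((Zᵀ * Z - μ • 1).mulVecLin)) := by
      intro Z
      refine le_antisymm (aux_eig_le Z hμ) ?_
      have := aux_eig_le Zᵀ hμ
      rwa [transpose_transpose] at this
    rw [le1 X, le1 Y, h]

open scoped MatrixOrder in
lemma aux_psd_sqrt {n : ℕ} {C : Matrix (Fin n) (Fin n) ℝ} (hC : C.PosSemidef) :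
    ∃ Ch : Matrix (Fin n) (Fin n) ℝ, Ch * Ch = C ∧ Ch.PosSemidef :=
  ⟨CFC.sqrt C, CFC.sqrt_mul_sqrt_self C hC.nonneg, (CFC.sqrt_nonneg C).posSemidef⟩

theorem stmt1 (v : ℕ) (C W : Matrix (Fin v) (Fin v) ℝ) (hC : C.PosSemidef) (hW : W.PosDef)
    (P : Matrix (Fin v) (Fin v) ℝ) (hPsymm : Pᵀ = P) (hPidem : P * P = P)
    (hPrange : colSpace P = colSpace C)
    (Cp G : Matrix (Fin v) (Fin v) ℝ) (hCp : IsMPInv C Cp)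
    (hG : IsMPInv (P * W⁻¹ * P) G)
    (R : Matrix (Fin v) (Fin v) ℝ) (hR : R.PosSemidef) (hRG : R * R = G)
    (Wsq : Matrix (Fin v) (Fin v) ℝ) (hWsq : Wsq.PosDef) (hWsqW : Wsq * Wsq = W)
    (N : Matrix (Fin v) (Fin v) ℝ) (hN : IsMPInv (R * Cp * R) N) :
    ∀ μ : ℝ,
      Module.finrank ℝ (LinearMap.ker ((Wsq⁻¹ * C * Wsq⁻¹ - μ • 1).mulVecLin)) =
        Module.finrank ℝ (LinearMap.ker ((N - μ • 1).mulVecLin)) := by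
  intro μ
  -- basic symmetry and invertibility facts
  have hCt : Cᵀ = C := aux_psd_symm hC
  have hWt : Wᵀ = W := aux_psd_symm hW.posSemidef
  have hRt : Rᵀ = R := aux_psd_symm hR
  have hWsqT : Wsqᵀ = Wsq := aux_psd_symm hWsq.posSemidef
  have hWsqDet : IsUnit Wsq.det := hWsq.det_pos.ne'.isUnit
  have hWsqinv : Wsq * Wsq⁻¹ = 1 := Matrix.mul_nonsing_inv _ hWsqDet
  have hWsqinv' : Wsq⁻¹ * Wsq = 1 := Matrix.nonsing_inv_mul _ hWsqDet
  have hWinvT : (W⁻¹)ᵀ = W⁻¹ := by rw [Matrix.transpose_nonsing_inv, hWt]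
  have hWsqinvT : (Wsq⁻¹)ᵀ = Wsq⁻¹ := by rw [Matrix.transpose_nonsing_inv, hWsqT]
  have hWinv2 : Wsq⁻¹ * Wsq⁻¹ = W⁻¹ := by rw [← hWsqW, Matrix.mul_inv_rev]
  -- P acts as identity on everything with column space inside that of C
  have hPC : P * C = C := by
    apply aux_ext_mulVec; intro x
    have hx : C *ᵥ x ∈ colSpace P := by rw [hPrange]; exact ⟨x, rfl⟩
    obtain ⟨y, hy⟩ := hx
    have hy' : P *ᵥ y = C *ᵥ x := hy
    calc (P * C) *ᵥ x = P *ᵥ (C *ᵥ x) := by rw [mulVec_mulVec]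
      _ = P *ᵥ (P *ᵥ y) := by rw [hy']
      _ = (P * P) *ᵥ y := by rw [mulVec_mulVec]
      _ = P *ᵥ y := by rw [hPidem]
      _ = C *ᵥ x := hy'
  have hCP : C * P = C := by
    have := congrArg transpose hPC
    rwa [transpose_mul, hCt, hPsymm] at this
  have hCpt : Cpᵀ = Cp := by
    have h1 := aux_mpinv_transpose hCp
    rw [hCt] at h1
    exact aux_mpinv_unique h1 hCp
  have hCCpT : (C * Cp)ᵀ = C * Cp := hCp.2.2.1
  have hCpC_eq : Cp * C = C * Cp := by
    have h3 : (C * Cp)ᵀ = Cp * C := by rw [transpose_mul, hCt, hCpt]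
    rw [← h3, hCCpT]
  have hFP : (C * Cp) * P = P := by
    apply aux_ext_mulVec; intro x
    have hx : P *ᵥ x ∈ colSpace C := by rw [← hPrange]; exact ⟨x, rfl⟩
    obtain ⟨y, hy⟩ := hx
    have hy' : C *ᵥ y = P *ᵥ x := hy
    calc ((C * Cp) * P) *ᵥ x = (C * Cp) *ᵥ (P *ᵥ x) := by rw [mulVec_mulVec]
      _ = (C * Cp) *ᵥ (C *ᵥ y) := by rw [hy']
      _ = ((C * Cp) * C) *ᵥ y := by rw [mulVec_mulVec]
      _ = C *ᵥ y := by rw [hCp.1]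
      _ = P *ᵥ x := hy'
  have hPF : P * (C * Cp) = C * Cp := by rw [← mul_assoc, hPC]
  have hCCp : C * Cp = P := by
    have h1 : P * (C * Cp) = P := by
      have := congrArg transpose hFP
      rwa [transpose_mul, hCCpT, hPsymm] at this
    exact hPF.symm.trans h1
  have hCpC : Cp * C = P := hCpC_eq.trans hCCp
  have hCpP : Cp * P = Cp := by rw [← hCCp, ← mul_assoc, hCp.2.1]
  have hPCp : P * Cp = Cp := by rw [← hCpC]; exact hCp.2.1
  -- the matrix A = P W⁻¹ P
  set A := P * W⁻¹ * P with hAdef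
  have hAt : Aᵀ = A := by
    rw [hAdef, transpose_mul, transpose_mul, hPsymm, hWinvT, mul_assoc]
  have hGt : Gᵀ = G := by
    have h1 := aux_mpinv_transpose hG
    rw [hAt] at h1
    exact aux_mpinv_unique h1 hG
  have hPA : P * A = A := by
    rw [hAdef, ← mul_assoc, ← mul_assoc, hPidem]
  have hAP : A * P = A := by rw [hAdef, mul_assoc, hPidem]
  have hAGt : (A * G)ᵀ = A * G := hG.2.2.1
  have hGA_eq : G * A = A * G := by rw [← hAGt, transpose_mul, hGt, hAt]
  -- A G = P
  have hQ0 : P - A * G = 0 := by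
    set Q := P - A * G with hQdef
    have hQt : Qᵀ = Q := by rw [hQdef, transpose_sub, hPsymm, hAGt]
    have hQA : Q * A = 0 := by rw [hQdef, sub_mul, hPA, hG.1, sub_self]
    have hPQ : P * Q = Q := by rw [hQdef, mul_sub, hPidem, ← mul_assoc, hPA]
    have hQP : Q * P = Q := by
      have := congrArg transpose hPQ
      rwa [transpose_mul, hQt, hPsymm] at this
    have hPQt : P * Qᵀ = Qᵀ := by rw [hQt]; exact hPQ
    have key : Q * W⁻¹ * Qᵀ = 0 := by
      have e1 : Q * A * Qᵀ = Q * W⁻¹ * Qᵀ := by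
        rw [hAdef]
        calc Q * (P * W⁻¹ * P) * Qᵀ = (Q * P) * W⁻¹ * (P * Qᵀ) := by noncomm_ring
          _ = Q * W⁻¹ * Qᵀ := by rw [hQP, hPQt]
      rw [← e1, hQA, zero_mul]
    have hQW : Q * Wsq⁻¹ = 0 := by
      apply aux_mul_transpose_self_eq_zero
      rw [transpose_mul, hWsqinvT]
      calc Q * Wsq⁻¹ * (Wsq⁻¹ * Qᵀ) = Q * (Wsq⁻¹ * Wsq⁻¹) * Qᵀ := by noncomm_ring
        _ = Q * W⁻¹ * Qᵀ := by rw [hWinv2]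
        _ = 0 := key
    calc Q = Q * (Wsq⁻¹ * Wsq) := by rw [hWsqinv', mul_one]
      _ = (Q * Wsq⁻¹) * Wsq := by rw [mul_assoc]
      _ = 0 := by rw [hQW, zero_mul]
  have hAG : A * G = P := (sub_eq_zero.mp hQ0).symm
  have hGA : G * A = P := hGA_eq.trans hAG
  have hPG : P * G = G := by rw [← hGA]; exact hG.2.1
  have hGP : G * P = G := by rw [← hAG, ← mul_assoc]; exact hG.2.1
  -- P R = R
  have hPR : P * R = R := by
    have hz : (P * R - R) * (P * R - R)ᵀ = 0 := by
      rw [transpose_sub, transpose_mul, hRt, hPsymm]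
      calc (P * R - R) * (R * P - R)
          = P * (R * R) * P - P * (R * R) - (R * R) * P + R * R := by noncomm_ring
        _ = P * G * P - P * G - G * P + G := by rw [hRG]
        _ = 0 := by rw [hPG, hGP]; abel
    have := aux_mul_transpose_self_eq_zero hz
    exact sub_eq_zero.mp this
  have hRP : R * P = R := by
    have := congrArg transpose hPR
    rwa [transpose_mul, hRt, hPsymm] at this
  -- R A R = P
  have hRAR : R * A * R = P := by
    have h1 : (P - R * A * R) * R = 0 := by
      calc (P - R * A * R) * R = P * R - R * A * (R * R) := by noncomm_ring
        _ = P * R - R * (A * G) := by rw [hRG, mul_assoc]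
        _ = R - R := by rw [hPR, hAG, hRP]
        _ = 0 := sub_self R
    have h3 : P - R * A * R = 0 := by
      calc P - R * A * R = (P - R * A * R) * P := by
            rw [sub_mul, hPidem, Matrix.mul_assoc (R * A) R P, hRP]
        _ = (P - R * A * R) * (G * A) := by rw [hGA]
        _ = (P - R * A * R) * ((R * R) * A) := by rw [hRG]
        _ = ((P - R * A * R) * R) * (R * A) := by noncomm_ring
        _ = 0 := by rw [h1, zero_mul]
    exact (sub_eq_zero.mp h3).symm
  -- N = R A C A R
  have hKN : (R * Cp * R) * (R * A * C * A * R) = P := by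
    calc (R * Cp * R) * (R * A * C * A * R)
        = (R * Cp) * (R * R) * (A * (C * (A * R))) := by noncomm_ring
      _ = (R * Cp) * G * (A * (C * (A * R))) := by rw [hRG]
      _ = R * (Cp * G * A) * (C * (A * R)) := by noncomm_ring
      _ = R * (Cp * P) * (C * (A * R)) := by rw [mul_assoc Cp G A, hGA]
      _ = R * Cp * C * (A * R) := by rw [hCpP]; noncomm_ring
      _ = R * P * (A * R) := by rw [mul_assoc R Cp C, hCpC]
      _ = R * A * R := by rw [hRP, ← mul_assoc]
      _ = P := hRAR
  have hNK : (R * A * C * A * R) * (R * Cp * R) = P := by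
    calc (R * A * C * A * R) * (R * Cp * R)
        = (R * A * C) * (A * (R * R)) * (Cp * R) := by noncomm_ring
      _ = (R * A * C) * (A * G) * (Cp * R) := by rw [hRG]
      _ = (R * A * C) * P * (Cp * R) := by rw [hAG]
      _ = (R * A) * (C * P) * (Cp * R) := by noncomm_ring
      _ = (R * A) * C * (Cp * R) := by rw [hCP]
      _ = (R * A) * (C * Cp) * R := by noncomm_ring
      _ = (R * A) * P * R := by rw [hCCp]
      _ = R * (A * P) * R := by noncomm_ring
      _ = R * A * R := by rw [hAP]
      _ = P := hRAR
  have hMP : IsMPInv (R * Cp * R) (R * A * C * A * R) := by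
    refine ⟨?_, ?_, ?_, ?_⟩
    · rw [hKN, ← mul_assoc, ← mul_assoc, hPR]
    · rw [hNK]
      calc P * (R * A * C * A * R) = (P * R) * (A * C * A * R) := by noncomm_ring
        _ = R * A * C * A * R := by rw [hPR]; noncomm_ring
    · rw [hKN, hPsymm]
    · rw [hNK, hPsymm]
  have hNval : N = R * A * C * A * R := aux_mpinv_unique hN hMP
  -- square root of C
  obtain ⟨Ch, hChC, hChpsd⟩ := aux_psd_sqrt hC
  have hCht : Chᵀ = Ch := aux_psd_symm hChpsd
  have hPCh : P * Ch = Ch := by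
    have hz : (P * Ch - Ch) * (P * Ch - Ch)ᵀ = 0 := by
      rw [transpose_sub, transpose_mul, hCht, hPsymm]
      calc (P * Ch - Ch) * (Ch * P - Ch)
          = P * (Ch * Ch) * P - P * (Ch * Ch) - (Ch * Ch) * P + Ch * Ch := by noncomm_ring
        _ = P * C * P - P * C - C * P + C := by rw [hChC]
        _ = 0 := by rw [hPC, hCP]; abel
    have := aux_mul_transpose_self_eq_zero hz
    exact sub_eq_zero.mp this
  have hChP : Ch * P = Ch := by
    have := congrArg transpose hPCh
    rwa [transpose_mul, hCht, hPsymm] at this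
  -- write both matrices as X Xᵀ with equal Xᵀ X
  have hM : Wsq⁻¹ * C * Wsq⁻¹ = (Wsq⁻¹ * Ch) * (Wsq⁻¹ * Ch)ᵀ := by
    rw [transpose_mul, hCht, hWsqinvT]
    calc Wsq⁻¹ * C * Wsq⁻¹ = Wsq⁻¹ * (Ch * Ch) * Wsq⁻¹ := by rw [hChC]
      _ = (Wsq⁻¹ * Ch) * (Ch * Wsq⁻¹) := by noncomm_ring
  have hNY : N = (R * A * Ch) * (R * A * Ch)ᵀ := by
    rw [hNval, transpose_mul, transpose_mul, hCht, hAt, hRt]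
    calc R * A * C * A * R = R * A * (Ch * Ch) * A * R := by rw [hChC]
      _ = (R * A * Ch) * (Ch * (A * R)) := by noncomm_ring
  have hXY : (Wsq⁻¹ * Ch)ᵀ * (Wsq⁻¹ * Ch) = (R * A * Ch)ᵀ * (R * A * Ch) := by
    rw [transpose_mul, transpose_mul, transpose_mul, hCht, hWsqinvT, hAt, hRt]
    calc Ch * Wsq⁻¹ * (Wsq⁻¹ * Ch) = Ch * (Wsq⁻¹ * Wsq⁻¹) * Ch := by noncomm_ring
      _ = Ch * W⁻¹ * Ch := by rw [hWinv2]
      _ = (Ch * P) * W⁻¹ * (P * Ch) := by rw [hChP, hPCh]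
      _ = Ch * (P * W⁻¹ * P) * Ch := by noncomm_ring
      _ = Ch * (A * G * A) * Ch := by rw [hG.1]
      _ = Ch * A * (G * (A * Ch)) := by noncomm_ring
      _ = Ch * A * ((R * R) * (A * Ch)) := by rw [hRG]
      _ = Ch * (A * R) * (R * A * Ch) := by noncomm_ring
  rw [hM, hNY]
  exact aux_key _ _ hXY μ
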